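/- If φ is the characteristic function of a Borel probability measure on ℝ^d, then I⁺(φ,φ) is also the characteristic function of a Borel probability measure on ℝ^d. -/

import Mathlib

open MeasureTheory
open scoped Classical Matrix
noncomputable section

/-- ℝ^d with the Euclidean structure. -/
abbrev Rd (d : ℕ) := EuclideanSpace ℝ (Fin d)

/-- The unit sphere S^{d-1} in ℝ^d. -/
abbrev Sd (d : ℕ) := Metric.sphere (0 : Rd d) 1

/-- The surface measure on the unit sphere. -/
noncomputable def sphMeasure (d : ℕ) : Measure (Sd d) :=
  (volume : Measure (Rd d)).toSphere

/-- k₊ = (k + |k| n)/2. -/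
noncomputable def kplus {d : ℕ} (k : Rd d) (n : Sd d) : Rd d :=
  (2⁻¹ : ℝ) • (k + ‖k‖ • (n : Rd d))

/-- k₋ = (k − |k| n)/2. -/
noncomputable def kminus {d : ℕ} (k : Rd d) (n : Sd d) : Rd d :=
  (2⁻¹ : ℝ) • (k - ‖k‖ • (n : Rd d))

/-- k̂·n for k ≠ 0. -/
noncomputable def khatDot {d : ℕ} (k : Rd d) (n : Sd d) : ℝ :=
  inner ℝ (‖k‖⁻¹ • k) (n : Rd d)

/-- The gain operator I⁺(φ,ψ). -/
noncomputable def Iplus {d : ℕ} (g : ℝ → ℝ) (φ ψ : Rd d → ℂ) (k : Rd d) : ℂ :=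
  if k = 0 then φ 0 * ψ 0
  else ∫ n, (g (khatDot k n) : ℂ) * φ (kplus k n) * ψ (kminus k n) ∂(sphMeasure d)

/-- Γ[φ] = I⁺(φ,φ). -/
noncomputable def Gam {d : ℕ} (g : ℝ → ℝ) (φ : Rd d → ℂ) : Rd d → ℂ :=
  Iplus g φ φ

/-- The linearized operator L, complex-valued version. -/
noncomputable def LopC {d : ℕ} (g : ℝ → ℝ) (ψ : Rd d → ℂ) (k : Rd d) : ℂ :=
  if k = 0 then 2 * ψ 0
  else ∫ n, (g (khatDot k n) : ℂ) * (ψ (kplus k n) + ψ (kminus k n)) ∂(sphMeasure d)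

/-- The linearized operator L, real-valued version. -/
noncomputable def LopR {d : ℕ} (g : ℝ → ℝ) (ψ : Rd d → ℝ) (k : Rd d) : ℝ :=
  if k = 0 then 2 * ψ 0
  else ∫ n, g (khatDot k n) * (ψ (kplus k n) + ψ (kminus k n)) ∂(sphMeasure d)

/-- The Fourier transform (characteristic function) of a measure. -/
noncomputable def charFunRd {d : ℕ} (μ : Measure (Rd d)) (k : Rd d) : ℂ :=
  ∫ v, Complex.exp (-(Complex.I * ((inner ℝ k v : ℝ) : ℂ))) ∂μ

/-- φ is the characteristic function of a Borel probability measure on ℝ^d. -/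
def IsCharFun {d : ℕ} (φ : Rd d → ℂ) : Prop :=
  ∃ μ : Measure (Rd d), IsProbabilityMeasure μ ∧ φ = charFunRd μ

/-- A matrix acting on ℝ^d as a continuous linear map. -/
noncomputable def matCLM {d : ℕ} (A : Matrix (Fin d) (Fin d) ℝ) : Rd d →L[ℝ] Rd d :=
  LinearMap.toContinuousLinearMap (Matrix.toEuclideanLin A)

/-- The operator norm ‖A‖ = sup_{|k|=1} |Ak|. -/
noncomputable def opN {d : ℕ} (A : Matrix (Fin d) (Fin d) ℝ) : ℝ := ‖matCLM A‖

/-- e^{tA} k, matrix exponential applied to a vector. -/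
noncomputable def expA {d : ℕ} (A : Matrix (Fin d) (Fin d) ℝ) (t : ℝ) (k : Rd d) : Rd d :=
  matCLM (NormedSpace.exp (t • A)) k

/-- A mild solution of the Fourier-transformed equation ∂ₜφ + φ + (Ak)·∂ₖφ = Γ[φ]. -/
def IsMildSolution {d : ℕ} (g : ℝ → ℝ) (A : Matrix (Fin d) (Fin d) ℝ)
    (φ₀ : Rd d → ℂ) (φ : ℝ → Rd d → ℂ) : Prop :=
  (∀ t, 0 ≤ t → IsCharFun (φ t)) ∧
  (∀ t, 0 ≤ t → ∀ ε > (0:ℝ), ∃ δ > (0:ℝ), ∀ s, 0 ≤ s → |s - t| < δ →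
      ∀ k, ‖φ s k - φ t k‖ ≤ ε) ∧
  (∀ t, 0 ≤ t → ∀ k, φ t k =
      (Real.exp (-t) : ℂ) * φ₀ (expA A (-t) k)
        + ∫ τ in (0:ℝ)..t, (Real.exp (-(t - τ)) : ℂ) * Gam g (φ τ) (expA A (-(t - τ)) k))


open scoped RealInnerProductSpace

/- ===================== Auxiliary material ===================== -/

namespace IplusAux

open Metric Set Complex Pointwise

variable {d : ℕ}

lemma norm_coe_sphere (n : Sd d) : ‖(n : Rd d)‖ = 1 := by
  have := n.2
  simpa [mem_sphere_zero_iff_norm] using this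

/-- A linear isometry swapping two given unit vectors. -/
lemma exists_swap_isometry (a b : Rd d) (ha : ‖a‖ = 1) (hb : ‖b‖ = 1) :
    ∃ R : Rd d ≃ₗᵢ[ℝ] Rd d, R a = b ∧ R b = a := by
  set K : Submodule ℝ (Rd d) := (ℝ ∙ (a - b))ᗮ with hK
  have hsum : a + b ∈ K := by
    rw [hK, Submodule.mem_orthogonal_singleton_iff_inner_left]
    have : ⟪a + b, a - b⟫ = ‖a‖ ^ 2 - ‖b‖ ^ 2 := by
      simp only [inner_add_left, inner_sub_right, real_inner_self_eq_norm_sq]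
      rw [real_inner_comm b a]; ring
    rw [this, ha, hb]; ring
  have hdiff : a - b ∈ Kᗮ := by
    exact Submodule.le_orthogonal_orthogonal _ (Submodule.mem_span_singleton_self _)
  refine ⟨Submodule.reflection K, ?_, ?_⟩
  · have h1 : Submodule.reflection K (a + b) = a + b := Submodule.reflection_mem_subspace_eq_self hsum
    have h2 : Submodule.reflection K (a - b) = -(a - b) :=
      Submodule.reflection_mem_subspace_orthogonalComplement_eq_neg hdiff
    have hcong : Submodule.reflection K a = Submodule.reflection K ((2⁻¹ : ℝ) • ((a + b) + (a - b))) := by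
      congr 1; module
    rw [hcong, _root_.map_smul, map_add, h1, h2]
    module
  · have h1 : Submodule.reflection K (a + b) = a + b := Submodule.reflection_mem_subspace_eq_self hsum
    have h2 : Submodule.reflection K (a - b) = -(a - b) :=
      Submodule.reflection_mem_subspace_orthogonalComplement_eq_neg hdiff
    have hcong : Submodule.reflection K b = Submodule.reflection K ((2⁻¹ : ℝ) • ((a + b) - (a - b))) := by
      congr 1; module
    rw [hcong, _root_.map_smul, map_sub, h1, h2]
    module

/-- The induced map on the unit sphere. -/
def sphMap (R : Rd d ≃ₗᵢ[ℝ] Rd d) (n : Sd d) : Sd d :=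
  ⟨R (n : Rd d), by
    rw [mem_sphere_zero_iff_norm, R.norm_map]
    exact norm_coe_sphere n⟩

lemma continuous_sphMap (R : Rd d ≃ₗᵢ[ℝ] Rd d) : Continuous (sphMap R) :=
  Continuous.subtype_mk (R.continuous.comp continuous_subtype_val) _

lemma measurable_sphMap (R : Rd d ≃ₗᵢ[ℝ] Rd d) : Measurable (sphMap R) :=
  (continuous_sphMap R).measurable

/-- The sphere map as a homeomorphism. -/
def sphHomeo (R : Rd d ≃ₗᵢ[ℝ] Rd d) : Sd d ≃ₜ Sd d where
  toFun := sphMap R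
  invFun := sphMap R.symm
  left_inv n := by
    apply Subtype.ext
    simp [sphMap]
  right_inv n := by
    apply Subtype.ext
    simp [sphMap]
  continuous_toFun := continuous_sphMap R
  continuous_invFun := continuous_sphMap R.symm

lemma map_volume_eq (R : Rd d ≃ₗᵢ[ℝ] Rd d) (X : Set (Rd d)) :
    (volume : Measure (Rd d)) (⇑R ⁻¹' X) = volume X := by
  have h : Measure.map (⇑R) (volume : Measure (Rd d)) = volume :=
    R.measurePreserving.map_eq
  have e : Rd d ≃ᵐ Rd d := R.toHomeomorph.toMeasurableEquiv
  calc (volume : Measure (Rd d)) (⇑R ⁻¹' X)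
      = (volume : Measure (Rd d)) (R.toHomeomorph.toMeasurableEquiv ⁻¹' X) := rfl
    _ = (Measure.map (⇑R.toHomeomorph.toMeasurableEquiv) (volume : Measure (Rd d))) X :=
        (R.toHomeomorph.toMeasurableEquiv.map_apply X).symm
    _ = volume X := by
        have : (⇑R.toHomeomorph.toMeasurableEquiv) = ⇑R := rfl
        rw [this, h]

lemma map_sphMeasure (R : Rd d ≃ₗᵢ[ℝ] Rd d) :
    Measure.map (sphMap R) (sphMeasure d) = sphMeasure d := by
  ext s hs
  rw [Measure.map_apply (measurable_sphMap R) hs]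
  rw [sphMeasure, Measure.toSphere_apply' _ ((measurable_sphMap R) hs),
    Measure.toSphere_apply' _ hs]
  congr 1
  have hset : (Subtype.val '' (sphMap R ⁻¹' s)) = ⇑R ⁻¹' (Subtype.val '' s) := by
    ext x
    constructor
    · rintro ⟨n, hn, rfl⟩
      exact ⟨sphMap R n, hn, rfl⟩
    · rintro ⟨m, hm, hmx⟩
      have hx : x ∈ Metric.sphere (0 : Rd d) 1 := by
        rw [mem_sphere_zero_iff_norm]
        have : ‖R x‖ = 1 := by rw [← hmx]; exact norm_coe_sphere m
        rwa [R.norm_map] at this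
      refine ⟨⟨x, hx⟩, ?_, rfl⟩
      show sphMap R ⟨x, hx⟩ ∈ s
      have : sphMap R ⟨x, hx⟩ = m := Subtype.ext hmx.symm
      rwa [this]
  rw [hset]
  have hset2 : Set.Ioo (0:ℝ) 1 • (⇑R ⁻¹' (Subtype.val '' s))
      = ⇑R ⁻¹' (Set.Ioo (0:ℝ) 1 • (Subtype.val '' s)) := by
    ext x
    rw [Set.mem_smul, Set.mem_preimage, Set.mem_smul]
    constructor
    · rintro ⟨r, hr, y, hy, rfl⟩
      exact ⟨r, hr, R y, hy, (R.map_smul r y).symm⟩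
    · rintro ⟨r, hr, z, hz, hrz⟩
      refine ⟨r, hr, R.symm z, by simpa using hz, ?_⟩
      apply R.injective
      rw [R.map_smul]
      simpa using hrz
  rw [hset2, map_volume_eq]

lemma measurePreserving_sphMap (R : Rd d ≃ₗᵢ[ℝ] Rd d) :
    MeasureTheory.MeasurePreserving (sphMap R) (sphMeasure d) (sphMeasure d) :=
  ⟨measurable_sphMap R, map_sphMeasure R⟩

lemma measurableEmbedding_sphMap (R : Rd d ≃ₗᵢ[ℝ] Rd d) :
    MeasurableEmbedding (sphMap R) :=
  (sphHomeo R).toMeasurableEquiv.measurableEmbedding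

/-- The sphere-swap identity. -/
lemma integral_sphere_swap (a b : Rd d) (ha : ‖a‖ = 1) (hb : ‖b‖ = 1) (F : ℝ → ℝ → ℂ) :
    ∫ n, F ⟪a, (n : Rd d)⟫ ⟪b, (n : Rd d)⟫ ∂(sphMeasure d)
      = ∫ n, F ⟪b, (n : Rd d)⟫ ⟪a, (n : Rd d)⟫ ∂(sphMeasure d) := by
  obtain ⟨R, hRa, hRb⟩ := exists_swap_isometry a b ha hb
  have key : ∀ n : Sd d,
      (⟪a, ((sphMap R n : Sd d) : Rd d)⟫ = ⟪b, (n : Rd d)⟫)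
      ∧ (⟪b, ((sphMap R n : Sd d) : Rd d)⟫ = ⟪a, (n : Rd d)⟫) := by
    intro n
    constructor
    · calc ⟪a, ((sphMap R n : Sd d) : Rd d)⟫ = ⟪R b, R (n : Rd d)⟫ := by rw [hRb]; rfl
        _ = ⟪b, (n : Rd d)⟫ := R.inner_map_map b (n : Rd d)
    · calc ⟪b, ((sphMap R n : Sd d) : Rd d)⟫ = ⟪R a, R (n : Rd d)⟫ := by rw [hRa]; rfl
        _ = ⟪a, (n : Rd d)⟫ := R.inner_map_map a (n : Rd d)
  calc ∫ n, F ⟪a, (n : Rd d)⟫ ⟪b, (n : Rd d)⟫ ∂(sphMeasure d)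
      = ∫ n, F ⟪a, ((sphMap R n : Sd d) : Rd d)⟫ ⟪b, ((sphMap R n : Sd d) : Rd d)⟫
          ∂(sphMeasure d) := by
        exact ((measurePreserving_sphMap R).integral_comp (measurableEmbedding_sphMap R)
          (fun m => F ⟪a, (m : Rd d)⟫ ⟪b, (m : Rd d)⟫)).symm
    _ = ∫ n, F ⟪b, (n : Rd d)⟫ ⟪a, (n : Rd d)⟫ ∂(sphMeasure d) := by
        apply MeasureTheory.integral_congr_ae
        filter_upwards with n
        rw [(key n).1, (key n).2]

end IplusAux

namespace IplusAux

open Metric Set Complex MeasureTheory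

variable {d : ℕ}

/-- Unit vector in the direction `v - w`, with a default direction `e` when `v = w`. -/
noncomputable def uhat (e : Rd d) (p : Rd d × Rd d) : Rd d :=
  if p.1 = p.2 then e else ‖p.1 - p.2‖⁻¹ • (p.1 - p.2)

lemma norm_uhat (e : Rd d) (he : ‖e‖ = 1) (p : Rd d × Rd d) : ‖uhat e p‖ = 1 := by
  rw [uhat]
  split_ifs with h
  · exact he
  · have hne : p.1 - p.2 ≠ 0 := sub_ne_zero.mpr h
    rw [norm_smul, norm_inv, norm_norm, inv_mul_cancel₀ (norm_ne_zero_iff.mpr hne)]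

lemma measurable_uhat (e : Rd d) : Measurable (uhat e) := by
  refine Measurable.ite (measurableSet_eq_fun measurable_fst measurable_snd) measurable_const ?_
  exact ((measurable_fst.sub measurable_snd).norm.inv).smul (measurable_fst.sub measurable_snd)

/-- The post-collision point map. -/
noncomputable def Tmap (p : (Rd d × Rd d) × Sd d) : Rd d :=
  (2⁻¹ : ℝ) • (p.1.1 + p.1.2) + (2⁻¹ * ‖p.1.1 - p.1.2‖) • (p.2 : Rd d)

lemma measurable_Tmap : Measurable (Tmap (d := d)) := by
  unfold Tmap
  apply Measurable.add
  · exact ((measurable_fst.comp measurable_fst :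
      Measurable fun p : (Rd d × Rd d) × Sd d => p.1.1).add
      (measurable_snd.comp measurable_fst)).const_smul (2⁻¹ : ℝ)
  · exact (((measurable_fst.comp measurable_fst).sub
      (measurable_snd.comp measurable_fst)).norm.const_mul _).smul
      (measurable_subtype_coe.comp measurable_snd)

lemma g_integrable (g : ℝ → ℝ) (hg_meas : Measurable g)
    (hg_norm : ∀ ω : Rd d, ‖ω‖ = 1 → ∫ n, g ⟪ω, (n : Rd d)⟫ ∂(sphMeasure d) = 1)
    (ω : Rd d) (hω : ‖ω‖ = 1) :
    Integrable (fun n : Sd d => g ⟪ω, (n : Rd d)⟫) (sphMeasure d) := by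
  by_contra h
  have := hg_norm ω hω
  rw [integral_undef h] at this
  exact zero_ne_one this

lemma norm_cexp_neg_I_mul (r : ℝ) : ‖Complex.exp (-(Complex.I * (r : ℂ)))‖ = 1 := by
  rw [Complex.norm_exp]
  simp

end IplusAux

namespace IplusAux

open Metric Set Complex MeasureTheory Filter

variable {d : ℕ}

instance : IsFiniteMeasure (sphMeasure d) := by
  unfold sphMeasure
  infer_instance


lemma integrable_of_norm_eq {α : Type*} [MeasurableSpace α] (μ2 : Measure α)
    [IsProbabilityMeasure μ2]
    (g : ℝ → ℝ) (hg_meas : Measurable g)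
    (hg_norm : ∀ ω : Rd d, ‖ω‖ = 1 → ∫ n, g ⟪ω, (n : Rd d)⟫ ∂(sphMeasure d) = 1)
    (u : α → Rd d) (hu : ∀ x, ‖u x‖ = 1)
    (F : α × Sd d → ℂ) (hFm : AEStronglyMeasurable F (μ2.prod (sphMeasure d)))
    (hFnorm : ∀ p, ‖F p‖ = g ⟪u p.1, (p.2 : Rd d)⟫) :
    Integrable F (μ2.prod (sphMeasure d)) := by
  rw [integrable_prod_iff hFm]
  constructor
  · filter_upwards [hFm.prodMk_left] with x hx
    exact (g_integrable g hg_meas hg_norm (u x) (hu x)).mono' hx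
      (Eventually.of_forall fun n => le_of_eq (hFnorm (x, n)))
  · have h1 : (fun x => ∫ n, ‖F (x, n)‖ ∂(sphMeasure d)) = fun _ => (1 : ℝ) := by
      funext x
      calc ∫ n, ‖F (x, n)‖ ∂(sphMeasure d)
          = ∫ n, g ⟪u x, (n : Rd d)⟫ ∂(sphMeasure d) := by
            apply integral_congr_ae
            filter_upwards with n
            exact hFnorm (x, n)
        _ = 1 := hg_norm _ (hu x)
    rw [h1]
    exact integrable_const 1

end IplusAux


/-- The gain operator maps characteristic functions to characteristic
    functions. -/
theorem Iplus_maps_charFun_to_charFun (d : ℕ) (hd : 2 ≤ d)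
    (g : ℝ → ℝ) (hg_meas : Measurable g) (hg_nonneg : ∀ x, 0 ≤ g x)
    (hg_norm : ∀ ω : Rd d, ‖ω‖ = 1 → ∫ n, g ⟪ω, (n : Rd d)⟫ ∂(sphMeasure d) = 1)
    (φ : Rd d → ℂ) (hφ : IsCharFun φ) :
    IsCharFun (Iplus g φ φ) := by
  classical
  obtain ⟨μ, hμ, hφeq⟩ := hφ
  haveI := hμ
  subst hφeq
  have hd0 : 0 < d := by omega
  set e₀ : Rd d := EuclideanSpace.single (⟨0, hd0⟩ : Fin d) (1 : ℝ) with he₀def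
  have he₀ : ‖e₀‖ = 1 := by
    rw [he₀def, EuclideanSpace.norm_single]
    norm_num
  have hwm : Measurable (fun p : (Rd d × Rd d) × Sd d =>
      g ⟪IplusAux.uhat e₀ p.1, (p.2 : Rd d)⟫) :=
    hg_meas.comp (((IplusAux.measurable_uhat e₀).comp measurable_fst).inner
      (measurable_subtype_coe.comp measurable_snd))
  set P : MeasureTheory.Measure ((Rd d × Rd d) × Sd d) :=
    (((μ.prod μ)).prod (sphMeasure d)).withDensity
      (fun p => ENNReal.ofReal (g ⟪IplusAux.uhat e₀ p.1, (p.2 : Rd d)⟫)) with hP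
  set ν : MeasureTheory.Measure (Rd d) := P.map IplusAux.Tmap with hν
  have hPuniv : P Set.univ = 1 := by
    rw [hP, MeasureTheory.withDensity_apply _ MeasurableSet.univ, Measure.restrict_univ,
      MeasureTheory.lintegral_prod _ hwm.ennreal_ofReal.aemeasurable]
    have hinner : ∀ vw : Rd d × Rd d,
        ∫⁻ n, ENNReal.ofReal (g ⟪IplusAux.uhat e₀ vw, (n : Rd d)⟫) ∂(sphMeasure d) = 1 := by
      intro vw
      have hu : ‖IplusAux.uhat e₀ vw‖ = 1 := IplusAux.norm_uhat e₀ he₀ vw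
      rw [← MeasureTheory.ofReal_integral_eq_lintegral_ofReal
        (IplusAux.g_integrable g hg_meas hg_norm _ hu)
        (Filter.Eventually.of_forall fun n => hg_nonneg _), hg_norm _ hu, ENNReal.ofReal_one]
    rw [MeasureTheory.lintegral_congr hinner, MeasureTheory.lintegral_one, measure_univ]
  haveI hνprob : IsProbabilityMeasure ν :=
    ⟨by rw [hν, MeasureTheory.Measure.map_apply IplusAux.measurable_Tmap MeasurableSet.univ,
        Set.preimage_univ, hPuniv]⟩
  refine ⟨ν, hνprob, ?_⟩
  funext k
  by_cases hk : k = 0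
  · have hone : ∀ (m : MeasureTheory.Measure (Rd d)), IsProbabilityMeasure m →
        charFunRd m (0 : Rd d) = 1 := by
      intro m hm
      rw [charFunRd]
      simp [inner_zero_left]
    subst hk
    simp [Iplus, hone μ hμ, hone ν hνprob]
  -- now k ≠ 0
  set khat : Rd d := ‖k‖⁻¹ • k with hkhatdef
  have hkhatnorm : ‖khat‖ = 1 := by
    rw [hkhatdef, norm_smul, norm_inv, norm_norm,
      inv_mul_cancel₀ (norm_ne_zero_iff.mpr hk)]
  have hkinner : ∀ n : Sd d, ‖k‖ * ⟪khat, (n : Rd d)⟫ = ⟪k, (n : Rd d)⟫ := by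
    intro n
    rw [hkhatdef, real_inner_smul_left, ← mul_assoc,
      mul_inv_cancel₀ (norm_ne_zero_iff.mpr hk), one_mul]
  have hci : ∀ ω : Rd d, ‖ω‖ = 1 →
      ∫ n, ((g ⟪ω, (n : Rd d)⟫ : ℝ) : ℂ) ∂(sphMeasure d) = 1 := by
    intro ω hω
    calc ∫ n, ((g ⟪ω, (n : Rd d)⟫ : ℝ) : ℂ) ∂(sphMeasure d)
        = ((∫ n, g ⟪ω, (n : Rd d)⟫ ∂(sphMeasure d) : ℝ) : ℂ) := integral_ofReal
      _ = 1 := by rw [hg_norm ω hω, Complex.ofReal_one]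
  -- the two integrands
  set A : (Rd d × Rd d) × Sd d → ℂ := fun p =>
    ((g ⟪IplusAux.uhat e₀ p.1, (p.2 : Rd d)⟫ : ℝ) : ℂ)
      * Complex.exp (-(Complex.I * ((⟪k, IplusAux.Tmap p⟫ : ℝ) : ℂ))) with hA
  set B : (Rd d × Rd d) → Sd d → ℂ := fun vw n =>
    ((g ⟪khat, (n : Rd d)⟫ : ℝ) : ℂ)
      * Complex.exp (-(Complex.I *
          ((2⁻¹ * ⟪k, vw.1 + vw.2⟫ + 2⁻¹ * ‖k‖ * ⟪vw.1 - vw.2, (n : Rd d)⟫ : ℝ) : ℂ))) with hB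
  -- measurability
  have hinnerTm : Measurable (fun p : (Rd d × Rd d) × Sd d => (⟪k, IplusAux.Tmap p⟫ : ℝ)) :=
    measurable_const.inner IplusAux.measurable_Tmap
  have hAm : Measurable A := by
    rw [hA]
    exact (Complex.measurable_ofReal.comp hwm).mul
      (Complex.measurable_exp.comp (((Complex.measurable_ofReal.comp hinnerTm).const_mul
        Complex.I).neg))
  have hBm : Measurable (Function.uncurry B) := by
    rw [hB]
    have h1 : Measurable (fun p : (Rd d × Rd d) × Sd d => (g ⟪khat, (p.2 : Rd d)⟫ : ℝ)) :=
      hg_meas.comp (measurable_const.inner (measurable_subtype_coe.comp measurable_snd))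
    have h2 : Measurable (fun p : (Rd d × Rd d) × Sd d =>
        (2⁻¹ * ⟪k, p.1.1 + p.1.2⟫ + 2⁻¹ * ‖k‖ * ⟪p.1.1 - p.1.2, (p.2 : Rd d)⟫ : ℝ)) := by
      apply Measurable.add
      · exact (measurable_const.inner ((measurable_fst.comp measurable_fst).add
          (measurable_snd.comp measurable_fst))).const_mul _
      · exact (((measurable_fst.comp measurable_fst).sub
          (measurable_snd.comp measurable_fst)).inner
          (measurable_subtype_coe.comp measurable_snd)).const_mul _
    exact (Complex.measurable_ofReal.comp h1).mul
      (Complex.measurable_exp.comp (((Complex.measurable_ofReal.comp h2).const_mul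
        Complex.I).neg))
  -- norms
  have hAnorm : ∀ p, ‖A p‖ = g ⟪IplusAux.uhat e₀ p.1, (p.2 : Rd d)⟫ := by
    intro p
    rw [hA]
    simp only
    rw [norm_mul, IplusAux.norm_cexp_neg_I_mul, mul_one, Complex.norm_real,
      Real.norm_eq_abs, abs_of_nonneg (hg_nonneg _)]
  have hBnorm : ∀ p : (Rd d × Rd d) × Sd d,
      ‖Function.uncurry B p‖ = g ⟪khat, (p.2 : Rd d)⟫ := by
    intro p
    rw [hB]
    simp only [Function.uncurry]
    rw [norm_mul, IplusAux.norm_cexp_neg_I_mul, mul_one, Complex.norm_real,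
      Real.norm_eq_abs, abs_of_nonneg (hg_nonneg _)]
  -- integrability
  have hAint : MeasureTheory.Integrable A ((μ.prod μ).prod (sphMeasure d)) :=
    IplusAux.integrable_of_norm_eq (μ.prod μ) g hg_meas hg_norm
      (fun vw => IplusAux.uhat e₀ vw) (IplusAux.norm_uhat e₀ he₀) A
      hAm.aestronglyMeasurable hAnorm
  have hBint : MeasureTheory.Integrable (Function.uncurry B) ((μ.prod μ).prod (sphMeasure d)) :=
    IplusAux.integrable_of_norm_eq (μ.prod μ) g hg_meas hg_norm
      (fun _ => khat) (fun _ => hkhatnorm) (Function.uncurry B)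
      hBm.aestronglyMeasurable hBnorm
  -- Step A : charFunRd ν k = triple integral
  have hcont : Continuous (fun x : Rd d =>
      Complex.exp (-(Complex.I * ((⟪k, x⟫ : ℝ) : ℂ)))) := by
    apply Complex.continuous_exp.comp
    apply Continuous.neg
    exact continuous_const.mul
      (Complex.continuous_ofReal.comp (continuous_const.inner continuous_id))
  have stepA : charFunRd ν k = ∫ p, A p ∂((μ.prod μ).prod (sphMeasure d)) := by
    rw [hν, charFunRd, MeasureTheory.integral_map IplusAux.measurable_Tmap.aemeasurable
      hcont.aestronglyMeasurable, hP]
    rw [show (fun p : (Rd d × Rd d) × Sd d =>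
        ENNReal.ofReal (g ⟪IplusAux.uhat e₀ p.1, (p.2 : Rd d)⟫))
      = (fun p : (Rd d × Rd d) × Sd d =>
        ((Real.toNNReal (g ⟪IplusAux.uhat e₀ p.1, (p.2 : Rd d)⟫) : NNReal) : ENNReal)) from rfl]
    rw [integral_withDensity_eq_integral_smul hwm.real_toNNReal]
    apply MeasureTheory.integral_congr_ae
    filter_upwards with p
    rw [hA]
    simp only
    rw [NNReal.smul_def, Real.coe_toNNReal _ (hg_nonneg _), Complex.real_smul]
  -- Step D : pointwise in vw, inner sphere integral
  have stepD : ∀ vw : Rd d × Rd d,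
      ∫ n, A (vw, n) ∂(sphMeasure d) = ∫ n, B vw n ∂(sphMeasure d) := by
    intro vw
    by_cases hvw : vw.1 = vw.2
    · -- diagonal case
      have hTeq : ∀ n : Sd d, (⟪k, IplusAux.Tmap (vw, n)⟫ : ℝ) = 2⁻¹ * ⟪k, vw.1 + vw.2⟫ := by
        intro n
        have hT0 : IplusAux.Tmap (vw, n) = (2⁻¹ : ℝ) • (vw.1 + vw.2) := by
          rw [IplusAux.Tmap]
          rw [show vw.1 - vw.2 = 0 from sub_eq_zero.mpr hvw]
          simp
        rw [hT0, real_inner_smul_right]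
      have hAeq : ∀ n : Sd d, A (vw, n)
          = ((g ⟪IplusAux.uhat e₀ vw, (n : Rd d)⟫ : ℝ) : ℂ)
            * Complex.exp (-(Complex.I * ((2⁻¹ * ⟪k, vw.1 + vw.2⟫ : ℝ) : ℂ))) := by
        intro n
        rw [hA]
        simp only
        rw [hTeq n]
      have hBeq : ∀ n : Sd d, B vw n
          = ((g ⟪khat, (n : Rd d)⟫ : ℝ) : ℂ)
            * Complex.exp (-(Complex.I * ((2⁻¹ * ⟪k, vw.1 + vw.2⟫ : ℝ) : ℂ))) := by
        intro n
        rw [hB]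
        simp only
        rw [hvw]
        simp
      rw [MeasureTheory.integral_congr_ae (Filter.Eventually.of_forall hAeq),
        MeasureTheory.integral_congr_ae (Filter.Eventually.of_forall hBeq),
        MeasureTheory.integral_mul_const, MeasureTheory.integral_mul_const,
        hci _ (IplusAux.norm_uhat e₀ he₀ vw), hci _ hkhatnorm]
    · -- off-diagonal : use the sphere swap
      have hvwne : vw.1 - vw.2 ≠ 0 := sub_ne_zero.mpr hvw
      have hnormne : ‖vw.1 - vw.2‖ ≠ 0 := norm_ne_zero_iff.mpr hvwne
      set F : ℝ → ℝ → ℂ := fun x y => ((g x : ℝ) : ℂ)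
        * Complex.exp (-(Complex.I *
            ((2⁻¹ * ⟪k, vw.1 + vw.2⟫ + 2⁻¹ * ‖vw.1 - vw.2‖ * ‖k‖ * y : ℝ) : ℂ))) with hF
      have hleft : ∀ n : Sd d, A (vw, n)
          = F ⟪IplusAux.uhat e₀ vw, (n : Rd d)⟫ ⟪khat, (n : Rd d)⟫ := by
        intro n
        have h1 : (⟪k, IplusAux.Tmap (vw, n)⟫ : ℝ)
            = 2⁻¹ * ⟪k, vw.1 + vw.2⟫ + 2⁻¹ * ‖vw.1 - vw.2‖ * ‖k‖ * ⟪khat, (n : Rd d)⟫ := by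
          rw [IplusAux.Tmap]
          rw [inner_add_right, real_inner_smul_right, real_inner_smul_right, ← hkinner n]
          ring
        rw [hA, hF]
        simp only
        rw [h1]
      have hright : ∀ n : Sd d, F ⟪khat, (n : Rd d)⟫ ⟪IplusAux.uhat e₀ vw, (n : Rd d)⟫
          = B vw n := by
        intro n
        have huh : IplusAux.uhat e₀ vw = ‖vw.1 - vw.2‖⁻¹ • (vw.1 - vw.2) := by
          rw [IplusAux.uhat, if_neg hvw]
        have hre : (2⁻¹ * ⟪k, vw.1 + vw.2⟫
              + 2⁻¹ * ‖vw.1 - vw.2‖ * ‖k‖ * ⟪IplusAux.uhat e₀ vw, (n : Rd d)⟫ : ℝ)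
            = 2⁻¹ * ⟪k, vw.1 + vw.2⟫ + 2⁻¹ * ‖k‖ * ⟪vw.1 - vw.2, (n : Rd d)⟫ := by
          rw [huh, real_inner_smul_left]
          rw [show 2⁻¹ * ⟪k, vw.1 + vw.2⟫
                + 2⁻¹ * ‖vw.1 - vw.2‖ * ‖k‖ * (‖vw.1 - vw.2‖⁻¹ * ⟪vw.1 - vw.2, (n : Rd d)⟫)
              = 2⁻¹ * ⟪k, vw.1 + vw.2⟫ + (‖vw.1 - vw.2‖ * ‖vw.1 - vw.2‖⁻¹)
                * (2⁻¹ * ‖k‖ * ⟪vw.1 - vw.2, (n : Rd d)⟫) from by ring]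
          rw [mul_inv_cancel₀ hnormne, one_mul]
        rw [hF, hB]
        simp only
        rw [hre]
      rw [MeasureTheory.integral_congr_ae (Filter.Eventually.of_forall hleft)]
      rw [IplusAux.integral_sphere_swap (IplusAux.uhat e₀ vw) khat
        (IplusAux.norm_uhat e₀ he₀ vw) hkhatnorm F]
      exact MeasureTheory.integral_congr_ae (Filter.Eventually.of_forall hright)
  -- Step F : pointwise in n, inner μ⊗μ integral
  have stepF : ∀ n : Sd d, ∫ vw, B vw n ∂(μ.prod μ)
      = ((g (khatDot k n) : ℝ) : ℂ)
        * (charFunRd μ (kplus k n) * charFunRd μ (kminus k n)) := by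
    intro n
    have hsplit : ∀ vw : Rd d × Rd d, B vw n
        = ((g ⟪khat, (n : Rd d)⟫ : ℝ) : ℂ)
          * (Complex.exp (-(Complex.I * ((⟪kplus k n, vw.1⟫ : ℝ) : ℂ)))
            * Complex.exp (-(Complex.I * ((⟪kminus k n, vw.2⟫ : ℝ) : ℂ)))) := by
      intro vw
      have hre : (2⁻¹ * ⟪k, vw.1 + vw.2⟫ + 2⁻¹ * ‖k‖ * ⟪vw.1 - vw.2, (n : Rd d)⟫ : ℝ)
          = ⟪kplus k n, vw.1⟫ + ⟪kminus k n, vw.2⟫ := by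
        simp only [kplus, kminus, real_inner_smul_left, inner_add_left, inner_sub_left,
          inner_add_right, inner_sub_right]
        rw [real_inner_comm (n : Rd d) vw.1, real_inner_comm (n : Rd d) vw.2]
        ring
      rw [hB]
      simp only
      rw [hre, Complex.ofReal_add, mul_add, neg_add, Complex.exp_add]
    rw [MeasureTheory.integral_congr_ae (Filter.Eventually.of_forall hsplit),
      MeasureTheory.integral_const_mul]
    congr 1
    rw [charFunRd, charFunRd]
    exact MeasureTheory.integral_prod_mul
      (fun v => Complex.exp (-(Complex.I * ((⟪kplus k n, v⟫ : ℝ) : ℂ))))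
      (fun w => Complex.exp (-(Complex.I * ((⟪kminus k n, w⟫ : ℝ) : ℂ))))
  -- assemble
  have main : charFunRd ν k = Iplus g (charFunRd μ) (charFunRd μ) k := by
    calc charFunRd ν k = ∫ p, A p ∂((μ.prod μ).prod (sphMeasure d)) := stepA
      _ = ∫ vw, ∫ n, A (vw, n) ∂(sphMeasure d) ∂(μ.prod μ) :=
          MeasureTheory.integral_prod _ hAint
      _ = ∫ vw, ∫ n, B vw n ∂(sphMeasure d) ∂(μ.prod μ) :=
          MeasureTheory.integral_congr_ae (Filter.Eventually.of_forall stepD)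
      _ = ∫ n, ∫ vw, B vw n ∂(μ.prod μ) ∂(sphMeasure d) :=
          MeasureTheory.integral_integral_swap hBint
      _ = ∫ n, ((g (khatDot k n) : ℝ) : ℂ)
            * (charFunRd μ (kplus k n) * charFunRd μ (kminus k n)) ∂(sphMeasure d) :=
          MeasureTheory.integral_congr_ae (Filter.Eventually.of_forall stepF)
      _ = Iplus g (charFunRd μ) (charFunRd μ) k := by
          simp only [Iplus, if_neg hk]
          apply MeasureTheory.integral_congr_ae
          filter_upwards with n
          rw [mul_assoc]
  exact main.symm

end
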